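/- Let f, g be Laurent polynomials in t over ℂ, and for integers m, n ≥ 0 define Ψ(f, m, g, n) = (m! n!/(m+n+1)!) · Res_{t=0}( f^{(n+1)}(t) · g^{(m)}(t) ), where Res_{t=0} denotes the coefficient of t^{-1}. Then Ψ is antisymmetric: Ψ(f, m, g, n) = −Ψ(g, n, f, m). -/

import Mathlib

open LaurentPolynomial

/-- The formal derivative of a Laurent polynomial. -/
noncomputable def lderiv (f : LaurentPolynomial ℂ) : LaurentPolynomial ℂ :=
  f.coeff.sum fun n a => (a * (n : ℂ)) • LaurentPolynomial.T (n - 1)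

/-- The residue at `t = 0`: the coefficient of `t⁻¹`. -/
noncomputable def lres (f : LaurentPolynomial ℂ) : ℂ := f.coeff (-1)

/-- The Kac–Peterson cocycle `Ψ(f, m, g, n)`. -/
noncomputable def KPcocycle (f : LaurentPolynomial ℂ) (m : ℕ) (g : LaurentPolynomial ℂ)
    (n : ℕ) : ℂ :=
  ((m.factorial * n.factorial : ℂ) / ((m + n + 1).factorial : ℂ)) *
    lres (lderiv^[n + 1] f * lderiv^[m] g)

lemma lderiv_single (j : ℤ) (c : ℂ) :
    lderiv (AddMonoidAlgebra.single j c) = (c * (j : ℂ)) • LaurentPolynomial.T (j - 1) := by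
  unfold lderiv
  rw [AddMonoidAlgebra.coeff_single, Finsupp.sum_single_index]
  simp

lemma lderiv_add (f g : LaurentPolynomial ℂ) :
    lderiv (f + g) = lderiv f + lderiv g := by
  unfold lderiv
  rw [AddMonoidAlgebra.coeff_add, Finsupp.sum_add_index] <;> intros <;> simp [add_mul, add_smul]

lemma lres_add (f g : LaurentPolynomial ℂ) : lres (f + g) = lres f + lres g := by
  unfold lres
  rw [AddMonoidAlgebra.coeff_add, Finsupp.add_apply]

lemma lres_smul (a : ℂ) (p : LaurentPolynomial ℂ) : lres (a • p) = a * lres p := by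
  unfold lres
  rw [AddMonoidAlgebra.coeff_smul, Finsupp.smul_apply, smul_eq_mul]

lemma lres_C_mul_T (a : ℂ) (s : ℤ) :
    lres (C a * LaurentPolynomial.T s) = if s = -1 then a else 0 := by
  rw [← single_eq_C_mul_T]
  unfold lres
  rw [AddMonoidAlgebra.coeff_single]
  exact Finsupp.single_apply

/-- integration by parts for residues -/
lemma lres_parts (f g : LaurentPolynomial ℂ) :
    lres (lderiv f * g) = - lres (f * lderiv g) := by
  induction f using AddMonoidAlgebra.induction_linear with
  | zero => simp [lderiv, lres]
  | add p q hp hq =>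
      rw [lderiv_add, add_mul, add_mul, lres_add, lres_add, hp, hq, neg_add]
  | single j c =>
      induction g using AddMonoidAlgebra.induction_linear with
      | zero => simp [lderiv, lres]
      | add p q hp hq =>
          rw [lderiv_add, mul_add, mul_add, lres_add, lres_add, hp, hq, neg_add]
      | single k d =>
          rw [lderiv_single, lderiv_single, single_eq_C_mul_T, single_eq_C_mul_T,
            smul_mul_assoc, mul_smul_comm]
          have e1 : LaurentPolynomial.T (j - 1) * (C d * LaurentPolynomial.T k)
              = C d * LaurentPolynomial.T (j - 1 + k) := by
            rw [T_add]; ring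
          have e2 : C c * LaurentPolynomial.T j * LaurentPolynomial.T (k - 1)
              = C c * LaurentPolynomial.T (j + (k - 1)) := by
            rw [mul_assoc, ← T_add]
          rw [e1, e2, lres_smul, lres_smul, lres_C_mul_T, lres_C_mul_T]
          by_cases h : j + k = 0
          · have h1 : j - 1 + k = -1 := by omega
            have h2 : j + (k - 1) = -1 := by omega
            have hj : (j : ℂ) = -(k : ℂ) := by
              have : j = -k := by omega
              simp [this]
            rw [if_pos h1, if_pos h2, hj]
            ring
          · have h1 : j - 1 + k ≠ -1 := by omega
            have h2 : j + (k - 1) ≠ -1 := by omega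
            rw [if_neg h1, if_neg h2]
            ring

/-- The Kac–Peterson cocycle is antisymmetric. -/
theorem KPcocycle_antisymm (f g : LaurentPolynomial ℂ) (m n : ℕ) :
    KPcocycle f m g n = - KPcocycle g n f m := by
  unfold KPcocycle
  have key : lres (lderiv^[n + 1] f * lderiv^[m] g)
      = - lres (lderiv^[m + 1] g * lderiv^[n] f) := by
    rw [Function.iterate_succ_apply', lres_parts,
      Function.iterate_succ_apply' lderiv m g, mul_comm]
  rw [key]
  have : (m + n + 1) = (n + m + 1) := by omega
  rw [this]
  ring
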